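/- Let C_n (n ≥ 4) be the cycle graph and suppose C_n = PCG(T, d_min, d_max). Then some pair of vertices at cycle-distance 2 (i.e., v_i and v_{i+2}, indices mod n) satisfies d_T(v_i, v_{i+2}) < d_min. -/

import Mathlib

open SimpleGraph

/-- A tree with positive real edge weights. -/
structure WTree (α : Type) where
  g : SimpleGraph α
  isTree : g.IsTree
  w : α → α → ℝ
  w_symm : ∀ a b, w a b = w b a
  w_pos : ∀ a b, g.Adj a b → 0 < w a b

/-- The weighted distance between two vertices of a weighted tree: the sum of
the weights of the edges on the unique path between them. -/
noncomputable def WTree.dist {α : Type} (T : WTree α) (u v : α) : ℝ :=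
  (((T.isTree.existsUnique_path u v).exists.choose).darts.map
    (fun d => T.w d.toProd.1 d.toProd.2)).sum

/-- A vertex of a weighted tree is a leaf if it has exactly one neighbor. -/
def WTree.IsLeaf {α : Type} (T : WTree α) (v : α) : Prop :=
  ∃! u, T.g.Adj v u

/-- `G = PCG(T, dmin, dmax)` via the leaf-assignment `f`. -/
def IsPCGWith {V β : Type} (G : SimpleGraph V) (T : WTree β) (f : V → β)
    (dmin dmax : ℝ) : Prop :=
  Function.Injective f ∧ (∀ v, T.IsLeaf (f v)) ∧ (∀ b, T.IsLeaf b → ∃ v, f v = b) ∧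
    ∀ u v : V, u ≠ v →
      (G.Adj u v ↔ dmin ≤ T.dist (f u) (f v) ∧ T.dist (f u) (f v) ≤ dmax)

/-- A graph is a pairwise compatibility graph. -/
def IsPCG {V : Type} (G : SimpleGraph V) : Prop :=
  ∃ (β : Type) (T : WTree β) (f : V → β) (dmin dmax : ℝ),
    0 ≤ dmin ∧ dmin ≤ dmax ∧ IsPCGWith G T f dmin dmax

namespace WTree

variable {α : Type} (T : WTree α)

noncomputable def wsum {u v : α} (p : T.g.Walk u v) : ℝ :=
  (p.darts.map (fun d => T.w d.toProd.1 d.toProd.2)).sum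

lemma wsum_append {u v x : α} (p : T.g.Walk u v) (q : T.g.Walk v x) :
    T.wsum (p.append q) = T.wsum p + T.wsum q := by
  simp [wsum, Walk.darts_append]

lemma wsum_nonneg {u v : α} (p : T.g.Walk u v) : 0 ≤ T.wsum p := by
  apply List.sum_nonneg
  rintro x hx
  obtain ⟨d, _, rfl⟩ := List.mem_map.1 hx
  exact (T.w_pos _ _ d.adj).le

lemma wsum_reverse {u v : α} (p : T.g.Walk u v) : T.wsum p.reverse = T.wsum p := by
  rw [wsum, Walk.darts_reverse, List.map_reverse, List.sum_reverse, List.map_map]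
  rw [show ((fun d : T.g.Dart => T.w d.toProd.1 d.toProd.2) ∘ SimpleGraph.Dart.symm)
      = fun d : T.g.Dart => T.w d.toProd.1 d.toProd.2 from ?_]
  · rfl
  · funext d
    exact (T.w_symm d.toProd.1 d.toProd.2).symm

lemma dist_eq_wsum {u v : α} (p : T.g.Walk u v) (hp : p.IsPath) :
    T.dist u v = T.wsum p := by
  have h := T.isTree.existsUnique_path u v
  have he : h.exists.choose = p := h.unique h.exists.choose_spec hp
  show T.wsum h.exists.choose = T.wsum p
  rw [he]

lemma dist_self (u : α) : T.dist u u = 0 :=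
  T.dist_eq_wsum Walk.nil Walk.IsPath.nil

lemma dist_comm (u v : α) : T.dist u v = T.dist v u := by
  have h := T.isTree.existsUnique_path u v
  rw [T.dist_eq_wsum h.exists.choose h.exists.choose_spec,
    T.dist_eq_wsum h.exists.choose.reverse h.exists.choose_spec.reverse, wsum_reverse]

lemma dist_nonneg (u v : α) : 0 ≤ T.dist u v := by
  have h := T.isTree.existsUnique_path u v
  rw [T.dist_eq_wsum h.exists.choose h.exists.choose_spec]
  exact T.wsum_nonneg _

lemma dist_split {u v m : α} (p : T.g.Walk u v) (hp : p.IsPath) (hm : m ∈ p.support) :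
    T.dist u v = T.dist u m + T.dist m v := by
  classical
  have h := congrArg T.wsum (p.take_spec hm)
  rw [wsum_append] at h
  rw [T.dist_eq_wsum p hp, ← h, T.dist_eq_wsum _ (hp.takeUntil hm),
    T.dist_eq_wsum _ (hp.dropUntil hm)]

end WTree

namespace WTree

variable {α : Type} (T : WTree α)

lemma dist_pos {u v : α} (huv : u ≠ v) : 0 < T.dist u v := by
  have h := T.isTree.existsUnique_path u v
  rw [T.dist_eq_wsum h.exists.choose h.exists.choose_spec]
  generalize h.exists.choose = p
  cases p with
  | nil => exact absurd rfl huv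
  | cons hadj q =>
    simp only [wsum, Walk.darts_cons, List.map_cons, List.sum_cons]
    have h1 := T.wsum_nonneg q
    have h2 := T.w_pos _ _ hadj
    show (0:ℝ) < T.w _ _ + T.wsum q
    linarith

lemma exists_common : ∀ {u v : α} (p : T.g.Walk u v), p.IsPath →
    ∀ {c : α} (r : T.g.Walk u c), r.IsPath →
    ∃ m, m ∈ p.support ∧ m ∈ r.support ∧ T.dist v c = T.dist v m + T.dist m c := by
  classical
  intro u v p
  induction p with
  | nil =>
    intro _ c r _
    exact ⟨_, Walk.start_mem_support _, r.start_mem_support, by rw [T.dist_self]; ring⟩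
  | @cons u x v hadj p' ih =>
    intro hp c r hr
    obtain ⟨hp', hup'⟩ := (Walk.cons_isPath_iff hadj p').mp hp
    by_cases hx : x ∈ r.support
    · obtain ⟨m, h1, h2, h3⟩ := ih hp' (r.dropUntil x hx) (hr.dropUntil hx)
      exact ⟨m, List.mem_cons_of_mem _ h1, r.support_dropUntil_subset hx h2, h3⟩
    · refine ⟨u, Walk.start_mem_support _, r.start_mem_support, ?_⟩
      have hdisj : ∀ y, y ∈ p'.support → y ∈ r.support → False := by
        intro y hy1 hy2
        have t1 : (Walk.cons hadj (p'.takeUntil y hy1)).IsPath :=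
          Walk.IsPath.cons (hp'.takeUntil hy1)
            (fun hu => hup' (p'.support_takeUntil_subset hy1 hu))
        have t2 : (r.takeUntil y hy2).IsPath := hr.takeUntil hy2
        have heq := (T.isTree.existsUnique_path u y).unique t1 t2
        apply hx
        have hx1 : x ∈ (Walk.cons hadj (p'.takeUntil y hy1)).support := by
          rw [Walk.support_cons]
          exact List.mem_cons_of_mem _ (p'.takeUntil y hy1).start_mem_support
        rw [heq] at hx1
        exact r.support_takeUntil_subset hy2 hx1
      have hqp : (p'.reverse.append (Walk.cons hadj.symm r)).IsPath := by
        rw [Walk.isPath_def, Walk.support_append]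
        apply List.Nodup.append
        · exact hp'.reverse.support_nodup
        · rw [Walk.support_cons]
          exact hr.support_nodup
        · intro y hy1 hy2
          rw [Walk.support_reverse, List.mem_reverse] at hy1
          rw [Walk.support_cons] at hy2
          exact hdisj y hy1 hy2
      have humem : u ∈ (p'.reverse.append (Walk.cons hadj.symm r)).support := by
        rw [Walk.mem_support_append_iff]
        exact Or.inr (by rw [Walk.support_cons]; exact List.mem_cons_of_mem _ r.start_mem_support)
      exact T.dist_split _ hqp humem

lemma exists_median_on {a b : α} (p : T.g.Walk a b) (hp : p.IsPath) (c : α) :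
    ∃ m, m ∈ p.support ∧ T.dist a b = T.dist a m + T.dist m b ∧
      T.dist a c = T.dist a m + T.dist m c ∧ T.dist b c = T.dist b m + T.dist m c := by
  have h := T.isTree.existsUnique_path a c
  obtain ⟨m, h1, h2, h3⟩ := T.exists_common p hp h.exists.choose h.exists.choose_spec
  exact ⟨m, h1, T.dist_split p hp h1,
    T.dist_split h.exists.choose h.exists.choose_spec h2, h3⟩

lemma exists_median (a b c : α) :
    ∃ m, T.dist a b = T.dist a m + T.dist m b ∧
      T.dist a c = T.dist a m + T.dist m c ∧ T.dist b c = T.dist b m + T.dist m c := by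
  have h := T.isTree.existsUnique_path a b
  obtain ⟨m, _, h1, h2, h3⟩ := T.exists_median_on h.exists.choose h.exists.choose_spec c
  exact ⟨m, h1, h2, h3⟩

lemma dist_triangle (u v m : α) : T.dist u v ≤ T.dist u m + T.dist m v := by
  obtain ⟨z, e1, e2, e3⟩ := T.exists_median u v m
  have c1 := T.dist_comm m v
  have c2 := T.dist_comm z v
  have c3 := T.dist_comm z m
  have := T.dist_nonneg z m
  linarith

lemma dichotomy {u v m m' : α} (p : T.g.Walk u v) (hp : p.IsPath)
    (hm : m ∈ p.support) (hm' : m' ∈ p.support) :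
    T.dist u m = T.dist u m' + T.dist m' m ∨ T.dist m v = T.dist m m' + T.dist m' v := by
  classical
  have hsplit : m' ∈ (p.takeUntil m hm).support ∨ m' ∈ (p.dropUntil m hm).support := by
    have h : m' ∈ ((p.takeUntil m hm).append (p.dropUntil m hm)).support := by
      rw [p.take_spec hm]; exact hm'
    rwa [Walk.mem_support_append_iff] at h
  rcases hsplit with h | h
  · exact Or.inl (T.dist_split _ (hp.takeUntil hm) h)
  · exact Or.inr (T.dist_split _ (hp.dropUntil hm) h)

lemma four_point (a b c d : α) :
    T.dist a b + T.dist c d ≤ max (T.dist a c + T.dist b d) (T.dist a d + T.dist b c) := by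
  have h := T.isTree.existsUnique_path a b
  obtain ⟨m, hm, ab1, ac1, bc1⟩ := T.exists_median_on h.exists.choose h.exists.choose_spec c
  obtain ⟨m', hm', ab2, ad2, bd2⟩ := T.exists_median_on h.exists.choose h.exists.choose_spec d
  have tri1 := T.dist_triangle c d m
  have tri2 := T.dist_triangle m d m'
  have cm1 := T.dist_comm c m
  have cm2 := T.dist_comm m m'
  have cm3 := T.dist_comm b m'
  have cm4 := T.dist_comm b m
  have cm5 := T.dist_comm m' m
  rcases T.dichotomy h.exists.choose h.exists.choose_spec hm hm' with hcase | hcase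
  · refine le_trans ?_ (le_max_left _ _)
    linarith
  · refine le_trans ?_ (le_max_right _ _)
    linarith

end WTree

open Fin.CommRing in
theorem cycle_red_two_non_edge {β : Type} (n : ℕ) (hn : 4 ≤ n)
    (T : WTree β) (f : Fin n → β) (dmin dmax : ℝ)
    (h0 : 0 ≤ dmin) (h1 : dmin ≤ dmax)
    (hpcg : IsPCGWith (SimpleGraph.cycleGraph n) T f dmin dmax) :
    ∃ i j : Fin n, (i.val + 2) % n = j.val ∧ T.dist (f i) (f j) < dmin := by
  by_contra hcon
  push_neg at hcon
  haveI : NeZero n := ⟨by omega⟩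
  obtain ⟨-, -, -, hiff⟩ := hpcg
  set D : Fin n → Fin n → ℝ := fun i j => T.dist (f i) (f j) with hD
  -- numeral values
  have v1 : (1 : Fin n).val = 1 := by
    rw [Fin.val_one']; exact Nat.mod_eq_of_lt (by omega)
  have v2 : ((2 : ℕ) : Fin n).val = 2 := by
    rw [Fin.val_natCast]; exact Nat.mod_eq_of_lt (by omega)
  -- edges
  have hne1 : ∀ i : Fin n, i ≠ i + 1 := by
    intro i h
    have h' : (1 : Fin n) = 0 := by linear_combination -h
    have := congrArg Fin.val h'
    rw [v1] at this
    simp at this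
  have hadj1 : ∀ i : Fin n, (SimpleGraph.cycleGraph n).Adj i (i + 1) := by
    intro i
    rw [SimpleGraph.cycleGraph_adj']
    right
    rw [add_sub_cancel_left, v1]
  have hedge : ∀ i : Fin n, dmin ≤ D i (i + 1) ∧ D i (i + 1) ≤ dmax := by
    intro i
    exact (hiff i (i + 1) (hne1 i)).mp (hadj1 i)
  -- 2-chords
  have hne2 : ∀ i : Fin n, i ≠ i + ((2 : ℕ) : Fin n) := by
    intro i h
    have h' : ((2 : ℕ) : Fin n) = 0 := by linear_combination -h
    have := congrArg Fin.val h'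
    rw [v2] at this
    simp at this
  have hnadj2 : ∀ i : Fin n, ¬ (SimpleGraph.cycleGraph n).Adj i (i + ((2 : ℕ) : Fin n)) := by
    intro i h
    rw [SimpleGraph.cycleGraph_adj'] at h
    rcases h with h | h
    · have he : i - (i + ((2 : ℕ) : Fin n)) = 1 := by
        apply Fin.ext
        rw [h, v1]
      have h3 : ((2 : ℕ) : Fin n) + 1 = 0 := by linear_combination -he
      have := congrArg Fin.val h3
      rw [Fin.add_def, v2, v1] at this
      simp only [Fin.val_zero] at this
      rw [Nat.mod_eq_of_lt (by omega)] at this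
      omega
    · rw [add_sub_cancel_left, v2] at h
      omega
  have hchord : ∀ i : Fin n, dmax < D i (i + ((2 : ℕ) : Fin n)) := by
    intro i
    by_contra hle
    push_neg at hle
    have hmin : dmin ≤ D i (i + ((2 : ℕ) : Fin n)) := by
      apply hcon i
      rw [Fin.add_def, v2]
    exact hnadj2 i ((hiff i _ (hne2 i)).mpr ⟨hmin, hle⟩)
  -- the second-vertex edge bound
  have hd2 : ∀ i : Fin n, D (i + 1) (i + ((2 : ℕ) : Fin n)) ≤ dmax := by
    intro i
    have h := (hedge (i + 1)).2
    rwa [show i + 1 + 1 = i + ((2 : ℕ) : Fin n) by push_cast; ring] at h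
  -- main induction on the span k
  have main : ∀ k : ℕ, 2 ≤ k → ∀ i : Fin n,
      dmax < D i (i + (k : Fin n)) ∧
      D i (i + ((2 : ℕ) : Fin n)) - D (i + 1) (i + ((2 : ℕ) : Fin n)) ≤
        D i (i + (k : Fin n)) - D (i + 1) (i + (k : Fin n)) := by
    intro k hk
    induction k, hk using Nat.le_induction with
    | base => exact fun i => ⟨hchord i, le_refl _⟩
    | succ k hk ih =>
      intro i
      have IH1 := (ih i).1
      have IH2 := (ih i).2
      have IH1' := (ih (i + 1)).1
      rw [show (i : Fin n) + 1 + (k : Fin n) = i + (k : Fin n) + 1 by ring] at IH1'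
      have e1 := (hedge i).2
      have e2 := (hedge (i + (k : Fin n))).2
      have fp := T.four_point (f i) (f (i + (k : Fin n))) (f (i + 1)) (f (i + (k : Fin n) + 1))
      have cm := T.dist_comm (f (i + (k : Fin n))) (f (i + 1))
      have hch := hchord i
      have hd2i := hd2 i
      rw [show ((k + 1 : ℕ) : Fin n) = (k : Fin n) + 1 by push_cast; ring]
      rw [show i + ((k : Fin n) + 1) = i + (k : Fin n) + 1 by ring]
      rcases le_max_iff.mp fp with hc | hc
      · exfalso
        have : D i (i + 1) + D (i + (k : Fin n)) (i + (k : Fin n) + 1) ≤ 2 * dmax := by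
          have := (hedge (i + (k : Fin n))).2
          linarith [e1, this]
        simp only [hD] at *
        linarith
      · constructor
        · simp only [hD] at *
          linarith
        · simp only [hD] at *
          linarith
  -- conclude: the (n-1)-span chord is an edge
  have hc1 : ((n - 1 : ℕ) : Fin n) + 1 = 0 := by
    rw [← Nat.cast_one (R := Fin n), ← Nat.cast_add, show n - 1 + 1 = n by omega,
      Fin.natCast_self]
  have hfinal := (main (n - 1) (by omega) 0).1
  have hedge' := (hedge (0 + ((n - 1 : ℕ) : Fin n))).2
  rw [show (0 : Fin n) + ((n - 1 : ℕ) : Fin n) + 1 = 0 by rw [add_assoc, hc1, add_zero]] at hedge'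
  have hcm := T.dist_comm (f (0 : Fin n)) (f (0 + ((n - 1 : ℕ) : Fin n)))
  simp only [hD] at hfinal hedge' hcm
  linarith
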